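/- Let S be an (nN) × (nN) complex matrix partitioned into N² blocks S_{ij} of size n × n, and for 1 ≤ k ≤ N−1 let S̃_k be the trailing k × k block corner of S, assumed invertible for all such k. Define β⁽⁰⁾_{ij} = S_{ij} and β⁽ᵏ⁾_{ij} = S_{ij} − σᵀ_{i,N−k+1} S̃_k⁻¹ s_{N−k+1,j} for k ≥ 1, where s_{ij} = (S_{ij}, …, S_{Nj})ᵀ and σᵀ_{ij} = (S_{ij}, …, S_{iN}). Then for 0 ≤ k ≤ N−2, whenever β⁽ᵏ⁾_{N−k,N−k} is invertible, the recursion β⁽ᵏ⁺¹⁾_{ij} = β⁽ᵏ⁾_{ij} − β⁽ᵏ⁾_{i,N−k} (β⁽ᵏ⁾_{N−k,N−k})⁻¹ β⁽ᵏ⁾_{N−k,j} holds for all 1 ≤ i,j ≤ N−k−1. -/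

import Mathlib

open Matrix

noncomputable section

/-- Assemble an `N × N` block matrix whose `n × n` blocks are given (with 1-based block
indices) by `S i j` for `1 ≤ i, j ≤ N`. -/
def blockMat (N n : ℕ) (S : ℕ → ℕ → Matrix (Fin n) (Fin n) ℂ) :
    Matrix (Fin N × Fin n) (Fin N × Fin n) ℂ :=
  Matrix.of fun p q => S (p.1.val + 1) (q.1.val + 1) p.2 q.2

/-- `S̃ₖ`: the trailing `k × k` block corner of the `N × N` block matrix `S`, consisting of
the blocks `S a b` with `N − k + 1 ≤ a, b ≤ N`. -/
def corner (N n k : ℕ) (S : ℕ → ℕ → Matrix (Fin n) (Fin n) ℂ) :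
    Matrix (Fin k × Fin n) (Fin k × Fin n) ℂ :=
  Matrix.of fun p q => S (N - k + p.1.val + 1) (N - k + q.1.val + 1) p.2 q.2

/-- `σᵀᵢ,ₙ₋ₖ₊₁`: the block row vector `(S i (N−k+1), …, S i N)` (here of block length `k`). -/
def rowVec (N n k : ℕ) (S : ℕ → ℕ → Matrix (Fin n) (Fin n) ℂ) (i : ℕ) :
    Matrix (Fin n) (Fin k × Fin n) ℂ :=
  Matrix.of fun r q => S i (N - k + q.1.val + 1) r q.2

/-- `sₙ₋ₖ₊₁,ⱼ`: the block column vector `(S (N−k+1) j, …, S N j)ᵀ` (here of block length `k`). -/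
def colVec (N n k : ℕ) (S : ℕ → ℕ → Matrix (Fin n) (Fin n) ℂ) (j : ℕ) :
    Matrix (Fin k × Fin n) (Fin n) ℂ :=
  Matrix.of fun p r => S (N - k + p.1.val + 1) j p.2 r

/-- The generalized Schur complements
`β⁽⁰⁾ᵢⱼ = Sᵢⱼ`, `β⁽ᵏ⁾ᵢⱼ = Sᵢⱼ − σᵀᵢ,ₙ₋ₖ₊₁ S̃ₖ⁻¹ sₙ₋ₖ₊₁,ⱼ` for `k ≥ 1`. -/
def beta (N n : ℕ) (S : ℕ → ℕ → Matrix (Fin n) (Fin n) ℂ) (k i j : ℕ) :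
    Matrix (Fin n) (Fin n) ℂ :=
  if k = 0 then S i j
  else S i j - rowVec N n k S i * (corner N n k S)⁻¹ * colVec N n k S j

/-- The `if`-free formula for `beta`: for `k = 0` the subtracted product is an empty
product and hence vanishes. -/
lemma beta_eq (N n : ℕ) (S : ℕ → ℕ → Matrix (Fin n) (Fin n) ℂ) (k i j : ℕ) :
    beta N n S k i j =
      S i j - rowVec N n k S i * (corner N n k S)⁻¹ * colVec N n k S j := by
  unfold beta
  split
  · subst ‹k = 0›
    have : rowVec N n 0 S i * (corner N n 0 S)⁻¹ * colVec N n 0 S j = 0 := by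
      ext u v
      simp [Matrix.mul_apply]
    rw [this, sub_zero]
  · rfl

/-- The generalized Schur complements `β⁽ᵏ⁾ᵢⱼ` satisfy the recursion
`β⁽ᵏ⁺¹⁾ᵢⱼ = β⁽ᵏ⁾ᵢⱼ − β⁽ᵏ⁾ᵢ,ₙ₋ₖ (β⁽ᵏ⁾ₙ₋ₖ,ₙ₋ₖ)⁻¹ β⁽ᵏ⁾ₙ₋ₖ,ⱼ`. -/
theorem beta_recursion (n N : ℕ)
    (S : ℕ → ℕ → Matrix (Fin n) (Fin n) ℂ)
    (hinv : ∀ k, 1 ≤ k → k + 1 ≤ N → IsUnit (corner N n k S))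
    (k : ℕ) (hk : k + 2 ≤ N)
    (hβ : IsUnit (beta N n S k (N - k) (N - k)))
    (i j : ℕ) (hi1 : 1 ≤ i) (hi2 : i ≤ N - k - 1) (hj1 : 1 ≤ j) (hj2 : j ≤ N - k - 1) :
    beta N n S (k + 1) i j =
      beta N n S k i j -
        beta N n S k i (N - k) * (beta N n S k (N - k) (N - k))⁻¹ *
          beta N n S k (N - k) j := by
  classical
  have hSc : ∀ {a a' b b' : ℕ} (u v : Fin n), a = a' → b = b' → S a b u v = S a' b' u v := by
    rintro a a' b b' u v rfl rfl; rfl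
  -- D = corner k is invertible
  haveI hDinv : Invertible (corner N n k S) := by
    by_cases h0 : k = 0
    · subst h0
      have : corner N n 0 S = 1 := by
        ext p q
        exact p.1.elim0
      rw [this]; exact invertibleOne
    · exact (hinv k (by omega) (by omega)).invertible
  have hDinv_eq : (corner N n k S)⁻¹ = ⅟ (corner N n k S) := (invOf_eq_nonsing_inv _).symm
  -- the Schur complement equals beta k (N-k) (N-k)
  have hE : beta N n S k (N - k) (N - k)
      = S (N - k) (N - k) - rowVec N n k S (N - k) * ⅟ (corner N n k S) * colVec N n k S (N - k) := by
    rw [beta_eq, hDinv_eq]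
  haveI hEinv : Invertible (S (N - k) (N - k) -
      rowVec N n k S (N - k) * ⅟ (corner N n k S) * colVec N n k S (N - k)) :=
    (hE ▸ hβ).invertible
  have hEinv_eq : (beta N n S k (N - k) (N - k))⁻¹
      = ⅟ (S (N - k) (N - k) -
          rowVec N n k S (N - k) * ⅟ (corner N n k S) * colVec N n k S (N - k)) := by
    rw [hE]; exact (invOf_eq_nonsing_inv _).symm
  -- the reindexing equivalence
  let e : (Fin n ⊕ Fin k × Fin n) ≃ (Fin (k + 1) × Fin n) :=
    { toFun := Sum.elim (fun r => (0, r)) (fun p => (p.1.succ, p.2))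
      invFun := fun p => Fin.cases (Sum.inl p.2) (fun a => Sum.inr (a, p.2)) p.1
      left_inv := by rintro (r | ⟨a, r⟩) <;> simp
      right_inv := by
        rintro ⟨p, u⟩
        induction p using Fin.cases <;> simp }
  have hesymm0 : ∀ u : Fin n, e.symm ((0 : Fin (k+1)), u) = Sum.inl u := by
    intro u; simp [e]
  have hesymmS : ∀ (a : Fin k) (u : Fin n), e.symm (a.succ, u) = Sum.inr (a, u) := by
    intro a u; simp [e]
  -- block decompositions
  have hcorner : corner N n (k + 1) S =
      (fromBlocks (S (N - k) (N - k)) (rowVec N n k S (N - k)) (colVec N n k S (N - k))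
        (corner N n k S)).submatrix e.symm e.symm := by
    ext ⟨p, u⟩ ⟨q, v⟩
    induction p using Fin.cases <;> induction q using Fin.cases <;>
      simp [submatrix_apply, hesymm0, hesymmS, corner, rowVec, colVec] <;>
      exact hSc u v (by omega) (by omega)
  have hrow : rowVec N n (k + 1) S i =
      (fromCols (S i (N - k)) (rowVec N n k S i)).submatrix id e.symm := by
    ext u ⟨q, v⟩
    induction q using Fin.cases <;>
      simp [submatrix_apply, hesymm0, hesymmS, rowVec, fromCols] <;>
      exact hSc u v (by omega) (by omega)
  have hcol : colVec N n (k + 1) S j =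
      (fromRows (S (N - k) j) (colVec N n k S j)).submatrix e.symm id := by
    ext ⟨p, u⟩ v
    induction p using Fin.cases <;>
      simp [submatrix_apply, hesymm0, hesymmS, colVec, fromRows, Sum.elim_inr, Sum.elim_inl, of_apply] <;>
      exact hSc u v (by norm_num; omega) (by omega)
  haveI hMinv : Invertible (fromBlocks (S (N - k) (N - k)) (rowVec N n k S (N - k))
      (colVec N n k S (N - k)) (corner N n k S)) :=
    fromBlocks₂₂Invertible _ _ _ _
  have hMinv_eq : (fromBlocks (S (N - k) (N - k)) (rowVec N n k S (N - k))
      (colVec N n k S (N - k)) (corner N n k S))⁻¹ =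
      fromBlocks
        (⅟ (S (N - k) (N - k) - rowVec N n k S (N - k) * ⅟ (corner N n k S) * colVec N n k S (N - k)))
        (-(⅟ (S (N - k) (N - k) - rowVec N n k S (N - k) * ⅟ (corner N n k S) * colVec N n k S (N - k)) *
            rowVec N n k S (N - k) * ⅟ (corner N n k S)))
        (-(⅟ (corner N n k S) * colVec N n k S (N - k) *
            ⅟ (S (N - k) (N - k) - rowVec N n k S (N - k) * ⅟ (corner N n k S) * colVec N n k S (N - k))))
        (⅟ (corner N n k S) + ⅟ (corner N n k S) * colVec N n k S (N - k) *
            ⅟ (S (N - k) (N - k) - rowVec N n k S (N - k) * ⅟ (corner N n k S) * colVec N n k S (N - k)) *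
            rowVec N n k S (N - k) * ⅟ (corner N n k S)) := by
    rw [← invOf_eq_nonsing_inv, invOf_fromBlocks₂₂_eq]
  rw [beta_eq N n S (k + 1) i j, hcorner, hrow, hcol, inv_submatrix_equiv,
    Matrix.submatrix_mul_equiv, Matrix.submatrix_mul_equiv, submatrix_id_id,
    hMinv_eq, Matrix.mul_assoc, fromBlocks_mul_fromRows, fromCols_mul_fromRows,
    beta_eq N n S k i j, beta_eq N n S k i (N - k), beta_eq N n S k (N - k) j,
    hEinv_eq, hDinv_eq]
  simp only [Matrix.mul_add, Matrix.add_mul, Matrix.mul_sub, Matrix.sub_mul,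
    Matrix.neg_mul, Matrix.mul_neg, Matrix.mul_assoc]
  abel

end
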